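/- Let I ≥ 2 and let f_i : (0,1] → ℝ (i = 1,…,I) be differentiable and strictly increasing with f_i(1) finite, lim_{q→0⁺} f_i(q) = −∞, and f_i integrable near 0; set A_i(p) = ∫₀^p f_i(s) ds, α(q) = Σ_i A_i(q_i) on the probability simplex Θ_I, and ρ(x) = sup_{q ∈ Θ_I} { −qᵀx − α(q) }. Then ρ is strictly convex for non-equivalent wealth vectors: whenever x₁, x₂ ∈ ℝ^I are such that x₁ − x₂ is not a scalar multiple of the all-ones vector e, one has ρ(τ·x₁ + (1−τ)·x₂) < τ·ρ(x₁) + (1−τ)·ρ(x₂) for every τ ∈ (0,1). -/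

import Mathlib

open MeasureTheory Set Filter

/-- The probability simplex in `ℝ^I`. -/
def simplex (I : ℕ) : Set (Fin I → ℝ) := {q | (∀ i, 0 ≤ q i) ∧ ∑ i, q i = 1}

/-- `penaltyA f p = ∫₀^p f(s) ds`. -/
noncomputable def penaltyA (f : ℝ → ℝ) (p : ℝ) : ℝ := ∫ s in (0 : ℝ)..p, f s

/-- The risk measure `ρ(x) = sup_{q ∈ Θ_I} { -qᵀx - Σᵢ ∫₀^{qᵢ} fᵢ }`. -/
noncomputable def rho (I : ℕ) (f : Fin I → ℝ → ℝ) (x : Fin I → ℝ) : ℝ :=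
  sSup {v : ℝ | ∃ q ∈ simplex I, v = -(∑ i, q i * x i) - ∑ i, penaltyA (f i) (q i)}

noncomputable def obj {I : ℕ} (f : Fin I → ℝ → ℝ) (x q : Fin I → ℝ) : ℝ :=
  -(∑ i, q i * x i) - ∑ i, penaltyA (f i) (q i)

lemma rho_eq_sSup (I : ℕ) (f : Fin I → ℝ → ℝ) (x : Fin I → ℝ) :
    rho I f x = sSup (obj f x '' simplex I) := by
  unfold rho
  congr 1
  ext v
  simp [obj, Set.mem_image, eq_comm]

lemma simplex_coord_mem {I : ℕ} {q : Fin I → ℝ} (hq : q ∈ simplex I) (i : Fin I) :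
    q i ∈ Icc (0:ℝ) 1 := by
  refine ⟨hq.1 i, ?_⟩
  calc q i ≤ ∑ k, q k := Finset.single_le_sum (fun k _ => hq.1 k) (Finset.mem_univ i)
  _ = 1 := hq.2

lemma penaltyA_continuousOn {g : ℝ → ℝ} (h : IntervalIntegrable g volume 0 1) :
    ContinuousOn (penaltyA g) (Icc 0 1) := by
  have := intervalIntegral.continuousOn_primitive_interval' h
    (a := 0) (Set.left_mem_uIcc (a := (0:ℝ)) (b := 1))
  exact (by simpa [Set.uIcc_of_le (zero_le_one (α := ℝ))] using this :
    ContinuousOn (fun b => ∫ x in (0:ℝ)..b, g x) (Icc 0 1))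

lemma obj_continuousOn {I : ℕ} {f : Fin I → ℝ → ℝ}
    (hint : ∀ i, ∀ p ∈ Set.Icc (0:ℝ) 1, IntervalIntegrable (f i) volume 0 p)
    (x : Fin I → ℝ) : ContinuousOn (obj f x) (simplex I) := by
  have h1 : ContinuousOn (fun q : Fin I → ℝ => ∑ i, q i * x i) (simplex I) := by
    apply continuousOn_finset_sum
    intro i _
    exact ((continuous_apply i).mul continuous_const).continuousOn
  have h2 : ContinuousOn (fun q : Fin I → ℝ => ∑ i, penaltyA (f i) (q i)) (simplex I) := by
    apply continuousOn_finset_sum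
    intro i _
    exact (penaltyA_continuousOn (hint i 1 (by norm_num))).comp
      (continuous_apply i).continuousOn (fun q hq => simplex_coord_mem hq i)
  exact h1.neg.sub h2

lemma exists_maximizer {I : ℕ} (hI : 1 ≤ I) (f : Fin I → ℝ → ℝ)
    (hint : ∀ i, ∀ p ∈ Set.Icc (0:ℝ) 1, IntervalIntegrable (f i) volume 0 p)
    (x : Fin I → ℝ) :
    ∃ q ∈ simplex I, IsMaxOn (obj f x) (simplex I) q ∧ rho I f x = obj f x q := by
  have hcpt : IsCompact (simplex I) := isCompact_stdSimplex ℝ (Fin I)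
  have hne : (simplex I).Nonempty := by
    refine ⟨fun _ => (I:ℝ)⁻¹, fun i => by positivity, ?_⟩
    have : (I:ℝ) ≠ 0 := by positivity
    simp [Finset.sum_const, Finset.card_univ, this]
  obtain ⟨q, hq, hmax⟩ := hcpt.exists_isMaxOn hne (obj_continuousOn hint x)
  refine ⟨q, hq, hmax, ?_⟩
  rw [rho_eq_sSup]
  refine IsGreatest.csSup_eq ⟨⟨q, hq, rfl⟩, ?_⟩
  rintro v ⟨q', hq', rfl⟩
  exact hmax hq'

lemma integral_le_const {g : ℝ → ℝ} {a b c : ℝ} (hab : a ≤ b)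
    (hg : ∀ s ∈ Set.Ioc a b, g s ≤ c)
    (hgint : IntervalIntegrable g volume a b) :
    ∫ s in a..b, g s ≤ (b - a) * c := by
  rw [intervalIntegral.integral_of_le hab]
  have h1 : ∫ s in Ioc a b, g s ≤ ∫ _s in Ioc a b, c := by
    refine setIntegral_mono_on hgint.1 ?_ measurableSet_Ioc hg
    exact integrableOn_const (by simp [Real.volume_Ioc, ENNReal.ofReal_lt_top])
  have h2 : ∫ _s in Ioc a b, c = (b - a) * c := by
    simp [Real.volume_Ioc, ENNReal.toReal_ofReal (by linarith : (0:ℝ) ≤ b - a), hab]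
  linarith


lemma integral_ge_const {g : ℝ → ℝ} {a b c : ℝ} (hab : a ≤ b)
    (hg : ∀ s ∈ Set.Ioc a b, c ≤ g s)
    (hgint : IntervalIntegrable g volume a b) :
    (b - a) * c ≤ ∫ s in a..b, g s := by
  rw [intervalIntegral.integral_of_le hab]
  have h1 : ∫ _s in Ioc a b, c ≤ ∫ s in Ioc a b, g s := by
    refine setIntegral_mono_on ?_ hgint.1 measurableSet_Ioc hg
    exact integrableOn_const (by simp [Real.volume_Ioc, ENNReal.ofReal_lt_top])
  have h2 : ∫ _s in Ioc a b, c = (b - a) * c := by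
    simp [Real.volume_Ioc, ENNReal.toReal_ofReal (by linarith : (0:ℝ) ≤ b - a), hab]
  linarith

def dvec {I : ℕ} (i j : Fin I) : Fin I → ℝ := fun k => if k = i then 1 else if k = j then -1 else 0

lemma dvec_sum {I : ℕ} {i j : Fin I} (hij : i ≠ j) : ∑ k, dvec i j k = 0 := by
  have key : ∀ k, dvec i j k = (if k = i then (1:ℝ) else 0) + (if k = j then (-1:ℝ) else 0) := by
    intro k
    rcases eq_or_ne k i with rfl | hki
    · simp [dvec, hij]
    · rcases eq_or_ne k j with rfl | hkj
      · simp [dvec, hki]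
      · simp [dvec, hki, hkj]
  simp only [key]
  rw [Finset.sum_add_distrib, Finset.sum_ite_eq' Finset.univ i, Finset.sum_ite_eq' Finset.univ j]
  simp

lemma perturb_mem {I : ℕ} {q : Fin I → ℝ} (hq : q ∈ simplex I) {i j : Fin I} (hij : i ≠ j)
    {t : ℝ} (h1 : 0 ≤ q i + t) (h2 : 0 ≤ q j - t) :
    (fun k => q k + t * dvec i j k) ∈ simplex I := by
  constructor
  · intro k
    rcases eq_or_ne k i with rfl | hki
    · simpa [dvec, hij] using h1
    · rcases eq_or_ne k j with rfl | hkj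
      · simpa [dvec, hki, sub_eq_add_neg, mul_comm] using h2
      · simpa [dvec, hki, hkj] using hq.1 k
  · rw [Finset.sum_add_distrib, ← Finset.mul_sum, dvec_sum hij, hq.2, mul_zero, add_zero]

lemma sum_perturb {I : ℕ} (F : Fin I → ℝ → ℝ) (q : Fin I → ℝ) {i j : Fin I} (hij : i ≠ j)
    (t : ℝ) :
    ∑ k, F k (q k + t * dvec i j k) =
      ∑ k, F k (q k) - F i (q i) - F j (q j) + F i (q i + t) + F j (q j - t) := by
  have key : ∀ k, F k (q k + t * dvec i j k) =
      F k (q k) + ((if k = i then F i (q i + t) - F i (q i) else 0)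
        + (if k = j then F j (q j - t) - F j (q j) else 0)) := by
    intro k
    rcases eq_or_ne k i with rfl | hki
    · simp [dvec, hij]
    · rcases eq_or_ne k j with rfl | hkj
      · simp [dvec, hki, sub_eq_add_neg, mul_comm]
      · simp [dvec, hki, hkj]
  simp only [key]
  rw [Finset.sum_add_distrib, Finset.sum_add_distrib, Finset.sum_ite_eq' Finset.univ i,
    Finset.sum_ite_eq' Finset.univ j]
  simp only [Finset.mem_univ, if_true]
  ring

lemma obj_perturb {I : ℕ} (f : Fin I → ℝ → ℝ) (x q : Fin I → ℝ) {i j : Fin I}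
    (hij : i ≠ j) (t : ℝ) :
    obj f x (fun k => q k + t * dvec i j k) =
      obj f x q - t * x i + t * x j + penaltyA (f i) (q i) + penaltyA (f j) (q j)
        - penaltyA (f i) (q i + t) - penaltyA (f j) (q j - t) := by
  unfold obj
  rw [sum_perturb (fun k p => p * x k) q hij t,
    sum_perturb (fun k p => penaltyA (f k) p) q hij t]
  ring

lemma f_le_on_Ioc {g : ℝ → ℝ} (hmono : StrictMonoOn g (Set.Ioc (0:ℝ) 1)) {a b : ℝ}
    (ha : 0 ≤ a) (hb : b ≤ 1) : ∀ s ∈ Set.Ioc a b, g s ≤ g b := by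
  intro s hs
  have hs' : s ∈ Set.Ioc (0:ℝ) 1 := ⟨lt_of_le_of_lt ha hs.1, le_trans hs.2 hb⟩
  have hb' : b ∈ Set.Ioc (0:ℝ) 1 := ⟨lt_of_le_of_lt ha (lt_of_lt_of_le hs.1 hs.2), hb⟩
  rcases hs.2.lt_or_eq with h | h
  · exact (hmono hs' hb' h).le
  · exact le_of_eq (by rw [h])

lemma maximizer_pos {I : ℕ} {f : Fin I → ℝ → ℝ}
    (hmono : ∀ i, StrictMonoOn (f i) (Set.Ioc (0:ℝ) 1))
    (hlim : ∀ i, Tendsto (f i) (nhdsWithin 0 (Set.Ioi 0)) atBot)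
    (hint : ∀ i, ∀ p ∈ Set.Icc (0:ℝ) 1, IntervalIntegrable (f i) volume 0 p)
    {x q : Fin I → ℝ} (hq : q ∈ simplex I) (hmax : IsMaxOn (obj f x) (simplex I) q) :
    ∀ i, 0 < q i := by
  intro i
  rcases (hq.1 i).lt_or_eq with h | h
  · exact h
  exfalso
  obtain ⟨j, hj⟩ : ∃ j, 0 < q j := by
    by_contra hc
    push_neg at hc
    have hz : ∀ k, q k = 0 := fun k => le_antisymm (hc k) (hq.1 k)
    have := hq.2
    rw [Finset.sum_congr rfl (fun k _ => hz k)] at this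
    simp at this
  have hij : i ≠ j := by rintro rfl; rw [← h] at hj; exact lt_irrefl _ hj
  have hqj1 : q j ≤ 1 := (simplex_coord_mem hq j).2
  -- choose ε
  have hev1 : ∀ᶠ ε in nhdsWithin (0:ℝ) (Set.Ioi 0), f i ε < x j - x i + f j (q j / 2) :=
    (hlim i).eventually (eventually_lt_atBot _)
  have hev2 : ∀ᶠ ε in nhdsWithin (0:ℝ) (Set.Ioi 0), ε ∈ Set.Ioo (0:ℝ) (q j / 2) :=
    Ioo_mem_nhdsGT (by linarith)
  obtain ⟨ε, hε1, hε2⟩ := (hev1.and hev2).exists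
  obtain ⟨hε0, hεqj⟩ := hε2
  have hε1' : ε ≤ 1 := by linarith
  -- the perturbed point
  have hmem : (fun k => q k + ε * dvec i j k) ∈ simplex I :=
    perturb_mem hq hij (by rw [← h]; linarith) (by linarith)
  have hle := hmax hmem
  simp only [Set.mem_setOf_eq] at hle
  rw [obj_perturb f x q hij ε] at hle
  -- bounds on the penalty terms
  have hA0 : penaltyA (f i) (q i) = 0 := by rw [← h]; simp [penaltyA]
  have bound1 : penaltyA (f i) (q i + ε) ≤ ε * f i ε := by
    rw [← h, zero_add]
    have := integral_le_const (a := 0) (b := ε) hε0.le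
      (f_le_on_Ioc (hmono i) le_rfl hε1') (hint i ε ⟨hε0.le, hε1'⟩)
    simpa [penaltyA] using this
  have bound2 : ε * f j (q j / 2) ≤ penaltyA (f j) (q j) - penaltyA (f j) (q j - ε) := by
    have hint1 : IntervalIntegrable (f j) volume 0 (q j) := hint j (q j) ⟨hj.le, hqj1⟩
    have hint2 : IntervalIntegrable (f j) volume 0 (q j - ε) :=
      hint j (q j - ε) ⟨by linarith, by linarith⟩
    have hsub : penaltyA (f j) (q j) - penaltyA (f j) (q j - ε)
        = ∫ s in (q j - ε)..(q j), f j s := by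
      unfold penaltyA
      exact intervalIntegral.integral_interval_sub_left hint1 hint2
    rw [hsub]
    have hint3 : IntervalIntegrable (f j) volume (q j - ε) (q j) :=
      hint1.mono_set (by
        rw [Set.uIcc_of_le (by linarith : q j - ε ≤ q j), Set.uIcc_of_le hj.le]
        exact Set.Icc_subset_Icc (by linarith) le_rfl)
    have hlow : ∀ s ∈ Set.Ioc (q j - ε) (q j), f j (q j / 2) ≤ f j s := by
      intro s hs
      have hm : (q j / 2) ∈ Set.Ioc (0:ℝ) 1 := ⟨by linarith, by linarith⟩
      have hs' : s ∈ Set.Ioc (0:ℝ) 1 := ⟨by linarith [hs.1], le_trans hs.2 hqj1⟩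
      exact (hmono j hm hs' (by linarith [hs.1])).le
    have := integral_ge_const (a := q j - ε) (b := q j) (by linarith) hlow hint3
    calc ε * f j (q j / 2) = (q j - (q j - ε)) * f j (q j / 2) := by ring_nf
    _ ≤ ∫ s in (q j - ε)..(q j), f j s := this
  -- contradiction
  have hbr : 0 < x j - x i - f i ε + f j (q j / 2) := by linarith
  nlinarith [mul_pos hε0 hbr]

lemma maximizer_lt_one {I : ℕ} (hI : 2 ≤ I) {q : Fin I → ℝ} (hq : q ∈ simplex I)
    (hpos : ∀ i, 0 < q i) : ∀ i, q i < 1 := by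
  intro i
  obtain ⟨j, hji⟩ : ∃ j : Fin I, j ≠ i := by
    rcases eq_or_ne i ⟨0, by omega⟩ with rfl | h
    · exact ⟨⟨1, by omega⟩, by simp [Fin.ext_iff]⟩
    · exact ⟨⟨0, by omega⟩, fun hc => h hc.symm⟩
  have hsum : q i + q j ≤ ∑ k, q k := by
    have : ∑ k ∈ ({i, j} : Finset (Fin I)), q k ≤ ∑ k, q k :=
      Finset.sum_le_sum_of_subset_of_nonneg (Finset.subset_univ _)
        (fun k _ _ => (hpos k).le)
    rwa [Finset.sum_pair (Ne.symm hji)] at this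
  rw [hq.2] at hsum
  have := hpos j
  linarith

lemma foc {I : ℕ} {f : Fin I → ℝ → ℝ}
    (hdiff : ∀ i, DifferentiableOn ℝ (f i) (Set.Ioc (0:ℝ) 1))
    (hint : ∀ i, ∀ p ∈ Set.Icc (0:ℝ) 1, IntervalIntegrable (f i) volume 0 p)
    {x q : Fin I → ℝ} (hq : q ∈ simplex I) (hpos : ∀ i, 0 < q i) (hlt : ∀ i, q i < 1)
    (hmax : IsMaxOn (obj f x) (simplex I) q) {i j : Fin I} (hij : i ≠ j) :
    f i (q i) + x i = f j (q j) + x j := by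
  have hdA : ∀ k, HasDerivAt (penaltyA (f k)) (f k (q k)) (q k) := by
    intro k
    have hIoo : q k ∈ Set.Ioo (0:ℝ) 1 := ⟨hpos k, hlt k⟩
    have hcont : ContinuousAt (f k) (q k) :=
      (hdiff k).continuousOn.continuousAt (Ioc_mem_nhds hIoo.1 hIoo.2)
    have hmeas : StronglyMeasurableAtFilter (f k) (nhds (q k)) :=
      ContinuousOn.stronglyMeasurableAtFilter isOpen_Ioo
        ((hdiff k).continuousOn.mono Set.Ioo_subset_Ioc_self) _ hIoo
    exact intervalIntegral.integral_hasDerivAt_right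
      (hint k (q k) ⟨(hpos k).le, (hlt k).le⟩) hmeas hcont
  set φ : ℝ → ℝ := fun t => obj f x q - t * x i + t * x j + penaltyA (f i) (q i)
      + penaltyA (f j) (q j) - penaltyA (f i) (q i + t) - penaltyA (f j) (q j - t) with hφdef
  have hd : HasDerivAt φ (-x i + x j - f i (q i) + f j (q j)) 0 := by
    have d1 : HasDerivAt (fun t : ℝ => penaltyA (f i) (q i + t)) (f i (q i)) 0 := by
      have hinner : HasDerivAt (fun t : ℝ => q i + t) 1 0 := (hasDerivAt_id 0).const_add (q i)
      have houter : HasDerivAt (penaltyA (f i)) (f i (q i)) ((fun t : ℝ => q i + t) 0) := by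
        simpa using hdA i
      have := houter.comp 0 hinner
      rw [mul_one] at this
      exact this
    have d2 : HasDerivAt (fun t : ℝ => penaltyA (f j) (q j - t)) (-f j (q j)) 0 := by
      have hinner : HasDerivAt (fun t : ℝ => q j - t) (-1) 0 := by
        exact (hasDerivAt_id 0).const_sub (q j)
      have houter : HasDerivAt (penaltyA (f j)) (f j (q j)) ((fun t : ℝ => q j - t) 0) := by
        simpa using hdA j
      have := houter.comp 0 hinner
      rw [mul_neg_one] at this
      exact this
    have dpoly : HasDerivAt (fun t : ℝ => obj f x q - t * x i + t * x j
        + penaltyA (f i) (q i) + penaltyA (f j) (q j)) (-x i + x j) 0 := by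
      have h1 : HasDerivAt (fun t : ℝ => t * x i) (x i) 0 := hasDerivAt_mul_const _
      have h2 : HasDerivAt (fun t : ℝ => t * x j) (x j) 0 := hasDerivAt_mul_const _
      have := (((hasDerivAt_const 0 (obj f x q)).sub h1).add h2).add_const
        (penaltyA (f i) (q i))
      have := this.add_const (penaltyA (f j) (q j))
      exact this.congr_deriv (by ring)
    have := (dpoly.sub d1).sub d2
    exact this.congr_deriv (by ring)
  have hloc : IsLocalMax φ 0 := by
    filter_upwards [Icc_mem_nhds (by linarith [hpos i] : -q i < 0) (hpos j)] with t ht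
    have hmem : (fun k => q k + t * dvec i j k) ∈ simplex I :=
      perturb_mem hq hij (by linarith [ht.1]) (by linarith [ht.2])
    have := hmax hmem
    simp only [Set.mem_setOf_eq] at this
    rw [obj_perturb f x q hij t] at this
    have hφ0 : φ 0 = obj f x q := by simp only [hφdef]; ring_nf
    rw [hφdef]
    simp only []
    calc obj f x q - t * x i + t * x j + penaltyA (f i) (q i) + penaltyA (f j) (q j)
        - penaltyA (f i) (q i + t) - penaltyA (f j) (q j - t) ≤ obj f x q := this
    _ = φ 0 := hφ0.symm
  have hzero := hloc.hasDerivAt_eq_zero hd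
  linarith

lemma obj_combo {I : ℕ} (f : Fin I → ℝ → ℝ) (x₁ x₂ q : Fin I → ℝ) (τ : ℝ) :
    obj f (τ • x₁ + (1 - τ) • x₂) q = τ * obj f x₁ q + (1 - τ) * obj f x₂ q := by
  unfold obj
  have hs : ∑ k, q k * (τ • x₁ + (1 - τ) • x₂) k
      = τ * ∑ k, q k * x₁ k + (1 - τ) * ∑ k, q k * x₂ k := by
    rw [Finset.mul_sum, Finset.mul_sum, ← Finset.sum_add_distrib]
    refine Finset.sum_congr rfl (fun k _ => ?_)
    simp only [Pi.add_apply, Pi.smul_apply, smul_eq_mul]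
    ring
  rw [hs]
  ring

/-- The risk measure `ρ` is strictly convex for non-equivalent wealth
vectors. -/
theorem stmt_10 (I : ℕ) (hI : 2 ≤ I) (f : Fin I → ℝ → ℝ)
    (hdiff : ∀ i, DifferentiableOn ℝ (f i) (Set.Ioc (0 : ℝ) 1))
    (hmono : ∀ i, StrictMonoOn (f i) (Set.Ioc (0 : ℝ) 1))
    (hlim : ∀ i, Filter.Tendsto (f i) (nhdsWithin 0 (Set.Ioi 0)) Filter.atBot)
    (hint : ∀ i, ∀ p ∈ Set.Icc (0 : ℝ) 1, IntervalIntegrable (f i) MeasureTheory.volume 0 p) :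
    ∀ x₁ x₂ : Fin I → ℝ, (¬ ∃ t : ℝ, x₁ - x₂ = t • (1 : Fin I → ℝ)) →
      ∀ τ : ℝ, 0 < τ → τ < 1 →
        rho I f (τ • x₁ + (1 - τ) • x₂) < τ * rho I f x₁ + (1 - τ) * rho I f x₂ := by
  intro x₁ x₂ hne τ hτ0 hτ1
  have hI1 : 1 ≤ I := by omega
  set x := τ • x₁ + (1 - τ) • x₂ with hxdef
  obtain ⟨q, hq, hmax, hrho⟩ := exists_maximizer hI1 f hint x
  obtain ⟨q₁, hq₁, hmax₁, hrho₁⟩ := exists_maximizer hI1 f hint x₁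
  obtain ⟨q₂, hq₂, hmax₂, hrho₂⟩ := exists_maximizer hI1 f hint x₂
  have h1 : obj f x₁ q ≤ rho I f x₁ := by rw [hrho₁]; exact hmax₁ hq
  have h2 : obj f x₂ q ≤ rho I f x₂ := by rw [hrho₂]; exact hmax₂ hq
  have hcombo : rho I f x = τ * obj f x₁ q + (1 - τ) * obj f x₂ q := by
    rw [hrho, hxdef, obj_combo]
  -- if q is a maximizer for both x₁ and x₂, contradiction
  have hnotboth : ¬ (obj f x₁ q = rho I f x₁ ∧ obj f x₂ q = rho I f x₂) := by
    rintro ⟨he1, he2⟩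
    have hmaxq1 : IsMaxOn (obj f x₁) (simplex I) q := by
      intro q' hq'
      simp only [Set.mem_setOf_eq]
      rw [he1, hrho₁]
      exact hmax₁ hq'
    have hmaxq2 : IsMaxOn (obj f x₂) (simplex I) q := by
      intro q' hq'
      simp only [Set.mem_setOf_eq]
      rw [he2, hrho₂]
      exact hmax₂ hq'
    have hpos : ∀ i, 0 < q i := maximizer_pos hmono hlim hint hq hmax
    have hlt : ∀ i, q i < 1 := maximizer_lt_one hI hq hpos
    -- first-order conditions
    have hfoc1 : ∀ i j : Fin I, i ≠ j → f i (q i) + x₁ i = f j (q j) + x₁ j :=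
      fun i j hij => foc hdiff hint hq hpos hlt hmaxq1 hij
    have hfoc2 : ∀ i j : Fin I, i ≠ j → f i (q i) + x₂ i = f j (q j) + x₂ j :=
      fun i j hij => foc hdiff hint hq hpos hlt hmaxq2 hij
    apply hne
    set j₀ : Fin I := ⟨0, by omega⟩
    refine ⟨x₁ j₀ - x₂ j₀, ?_⟩
    funext i
    simp only [Pi.sub_apply, Pi.smul_apply, Pi.one_apply, smul_eq_mul, mul_one]
    rcases eq_or_ne i j₀ with rfl | hij
    · ring
    · have e1 := hfoc1 i j₀ hij
      have e2 := hfoc2 i j₀ hij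
      linarith
  rcases h1.lt_or_eq with hs1 | he1
  · have : rho I f x < τ * rho I f x₁ + (1 - τ) * rho I f x₂ := by
      rw [hcombo]
      have := mul_lt_mul_of_pos_left hs1 hτ0
      have h2' := mul_le_mul_of_nonneg_left h2 (by linarith : (0:ℝ) ≤ 1 - τ)
      linarith
    exact this
  · rcases h2.lt_or_eq with hs2 | he2
    · rw [hcombo]
      have := mul_lt_mul_of_pos_left hs2 (by linarith : (0:ℝ) < 1 - τ)
      have h1' := mul_le_mul_of_nonneg_left h1 hτ0.le
      linarith
    · exact absurd ⟨he1, he2⟩ hnotboth
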